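/- Let (x^k)_{k≥1} be a sequence of vectors in ℝ^n with positive entries such that ‖(x^{k+1} − x^k)/x^k‖₂ ≤ C < 1/2 for all k (entrywise division). Then for any ε ∈ (0,1), the number of indices i such that x^k_i > (1+ε) x^1_i or x^k_i < (1−ε) x^1_i is at most O((Ck/ε)²); concretely, if T is the number of such indices, then T · log(1+ε) ≤ 2√(T+1) · kC. -/

import Mathlib

open Finset Real

lemma log_sq_le_aux (d : ℝ) (hd : |d| < 1/2) : (Real.log (1 + d))^2 ≤ 4 * d^2 := by
  have hd1 : -(1/2) < d := neg_lt_of_abs_lt hd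
  have hd2 : d < 1/2 := lt_of_abs_lt hd
  have hp : (0:ℝ) < 1 + d := by linarith
  have hub : Real.log (1 + d) ≤ d := by
    have := Real.log_le_sub_one_of_pos hp; linarith
  have hlb : -(2*|d|) ≤ Real.log (1 + d) := by
    rcases le_or_gt 0 d with h0 | h0
    · have h1 : (0:ℝ) ≤ Real.log (1+d) := Real.log_nonneg (by linarith)
      have h2 : |d| = d := abs_of_nonneg h0
      nlinarith [abs_nonneg d]
    · have hinv : Real.log ((1+d)⁻¹) ≤ (1+d)⁻¹ - 1 :=
        Real.log_le_sub_one_of_pos (by positivity)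
      have hni : (1+d)⁻¹ - 1 = -d / (1+d) := by field_simp; ring
      have hfr : -d / (1+d) ≤ -(2*d) := by
        rw [div_le_iff₀ hp]; nlinarith
      have hlog : Real.log ((1+d)⁻¹) = -Real.log (1+d) := Real.log_inv _
      have habs : |d| = -d := abs_of_neg h0
      rw [habs]; rw [hlog, hni] at hinv; linarith
  have hub2 : Real.log (1+d) ≤ 2*|d| := le_trans hub (by nlinarith [le_abs_self d, abs_nonneg d])
  nlinarith [sq_abs d, abs_nonneg d]

open Classical in
theorem stmt10 (n : ℕ) (x : ℕ → Fin n → ℝ) (C : ℝ) (hC : C < 1 / 2)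
    (hpos : ∀ k i, 0 < x k i)
    (h : ∀ k, Real.sqrt (∑ i, ((x (k + 1) i - x k i) / x k i) ^ 2) ≤ C)
    (ε : ℝ) (hε : 0 < ε) (hε1 : ε < 1) (k : ℕ) :
    (Finset.univ.filter
        (fun i => x k i > (1 + ε) * x 0 i ∨ x k i < (1 - ε) * x 0 i)).card *
        Real.log (1 + ε) ≤
      2 * Real.sqrt ((Finset.univ.filter
        (fun i => x k i > (1 + ε) * x 0 i ∨ x k i < (1 - ε) * x 0 i)).card + 1) *
        k * C := by
  have hC0 : 0 ≤ C := le_trans (Real.sqrt_nonneg _) (h 0)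
  -- the euclidean log vectors
  set f : ℕ → EuclideanSpace ℝ (Fin n) := fun m => WithLp.toLp 2 (fun i => Real.log (x m i / x 0 i)) with hf
  have hnorm : ∀ m, ‖f m‖ = Real.sqrt (∑ i, (Real.log (x m i / x 0 i))^2) := by
    intro m
    rw [EuclideanSpace.norm_eq]
    congr 1; apply Finset.sum_congr rfl; intro i _
    simp [hf, Real.norm_eq_abs, sq_abs]
  have key : ∀ m, ‖f m‖ ≤ 2 * m * C := by
    intro m
    induction m with
    | zero =>
      have : f 0 = 0 := by
        ext i
        simp [hf, div_self (hpos 0 i).ne']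
      simp [this]
    | succ m ih =>
      have hsum : ∑ i, ((x (m + 1) i - x m i) / x m i) ^ 2 ≤ C^2 := by
        have h1 := h m
        have h2 : (0:ℝ) ≤ ∑ i, ((x (m + 1) i - x m i) / x m i) ^ 2 :=
          Finset.sum_nonneg fun i _ => sq_nonneg _
        nlinarith [Real.sq_sqrt h2, Real.sqrt_nonneg (∑ i, ((x (m + 1) i - x m i) / x m i) ^ 2)]
      have hdi : ∀ i, |(x (m + 1) i - x m i) / x m i| < 1/2 := by
        intro i
        have h2 : ((x (m + 1) i - x m i) / x m i)^2 ≤ C^2 := by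
          refine le_trans ?_ hsum
          exact Finset.single_le_sum (f := fun j => ((x (m + 1) j - x m j) / x m j) ^ 2)
            (fun j _ => sq_nonneg _) (Finset.mem_univ i)
        nlinarith [sq_abs ((x (m + 1) i - x m i) / x m i),
          abs_nonneg ((x (m + 1) i - x m i) / x m i)]
      have hdiff : ‖f (m+1) - f m‖ ≤ 2 * C := by
        have heq : ∀ i, (f (m+1) - f m) i = Real.log (1 + (x (m + 1) i - x m i) / x m i) := by
          intro i
          have hx0 : x 0 i ≠ 0 := (hpos 0 i).ne'
          have hxm : x m i ≠ 0 := (hpos m i).ne'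
          have : (1 : ℝ) + (x (m + 1) i - x m i) / x m i = x (m+1) i / x m i := by
            field_simp; ring
          simp only [PiLp.sub_apply, hf, PiLp.toLp_apply]
          rw [this, Real.log_div (hpos (m+1) i).ne' hx0, Real.log_div (hpos m i).ne' hx0,
            Real.log_div (hpos (m+1) i).ne' hxm]
          ring
        rw [EuclideanSpace.norm_eq]
        have hb : ∑ i, |(f (m+1) - f m) i|^2 ≤ 4 * C^2 := by
          calc ∑ i, |(f (m+1) - f m) i|^2
              ≤ ∑ i, 4 * ((x (m + 1) i - x m i) / x m i)^2 := by
                apply Finset.sum_le_sum; intro i _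
                rw [sq_abs, heq i]
                exact log_sq_le_aux _ (hdi i)
            _ = 4 * ∑ i, ((x (m + 1) i - x m i) / x m i)^2 := by rw [Finset.mul_sum]
            _ ≤ 4 * C^2 := by linarith
        have : Real.sqrt (∑ i, |(f (m+1) - f m) i|^2) ≤ Real.sqrt (4 * C^2) :=
          Real.sqrt_le_sqrt hb
        calc Real.sqrt (∑ i, |(f (m+1) - f m) i|^2) ≤ Real.sqrt (4 * C^2) := this
          _ = 2 * C := by
            rw [show (4:ℝ) * C^2 = (2*C)^2 by ring, Real.sqrt_sq (by linarith)]
      have heq2 : f (m+1) = f m + (f (m+1) - f m) := by abel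
      calc ‖f (m+1)‖ = ‖f m + (f (m+1) - f m)‖ := by rw [← heq2]
        _ ≤ ‖f m‖ + ‖f (m+1) - f m‖ := norm_add_le _ _
        _ ≤ 2 * m * C + 2 * C := add_le_add ih hdiff
        _ = 2 * (↑(m+1) : ℝ) * C := by push_cast; ring
  -- counting
  set S := Finset.univ.filter
      (fun i => x k i > (1 + ε) * x 0 i ∨ x k i < (1 - ε) * x 0 i) with hS
  set L := Real.log (1 + ε) with hL
  have hL0 : 0 < L := Real.log_pos (by linarith)
  have hper : ∀ i ∈ S, L^2 ≤ (Real.log (x k i / x 0 i))^2 := by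
    intro i hi
    have hx0 := hpos 0 i
    have hxk := hpos k i
    rcases (Finset.mem_filter.mp hi).2 with h1 | h1
    · have hr : 1 + ε < x k i / x 0 i := by
        rw [lt_div_iff₀ hx0]; linarith
      have : L ≤ Real.log (x k i / x 0 i) := Real.log_le_log (by linarith) hr.le
      nlinarith
    · have hr : x k i / x 0 i < 1 - ε := by
        rw [div_lt_iff₀ hx0]; linarith
      have h2 : Real.log (x k i / x 0 i) ≤ Real.log (1 - ε) :=
        Real.log_le_log (by positivity) hr.le
      have h3 : Real.log (1 - ε) + L ≤ 0 := by
        rw [hL, ← Real.log_mul (by linarith) (by linarith)]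
        have : (1 - ε) * (1 + ε) ≤ 1 := by nlinarith
        calc Real.log ((1 - ε) * (1 + ε)) ≤ Real.log 1 :=
          Real.log_le_log (by nlinarith) this
          _ = 0 := Real.log_one
      nlinarith
  have hsq : (S.card : ℝ) * L^2 ≤ (2 * k * C)^2 := by
    have h1 : (S.card : ℝ) * L^2 ≤ ∑ i ∈ S, (Real.log (x k i / x 0 i))^2 := by
      calc (S.card : ℝ) * L^2 = ∑ _i ∈ S, L^2 := by
            rw [Finset.sum_const, nsmul_eq_mul]
        _ ≤ ∑ i ∈ S, (Real.log (x k i / x 0 i))^2 := Finset.sum_le_sum hper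
    have h2 : ∑ i ∈ S, (Real.log (x k i / x 0 i))^2 ≤ ∑ i, (Real.log (x k i / x 0 i))^2 :=
      Finset.sum_le_sum_of_subset_of_nonneg (Finset.filter_subset _ _)
        (fun i _ _ => sq_nonneg _)
    have h3 := key k
    rw [hnorm k] at h3
    have h4 : (0:ℝ) ≤ ∑ i, (Real.log (x k i / x 0 i))^2 :=
      Finset.sum_nonneg fun i _ => sq_nonneg _
    nlinarith [Real.sq_sqrt h4, Real.sqrt_nonneg (∑ i, (Real.log (x k i / x 0 i))^2)]
  -- finish
  set t := (S.card : ℝ) with ht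
  have ht0 : 0 ≤ t := Nat.cast_nonneg _
  have hkc : 0 ≤ 2 * (k:ℝ) * C := by positivity
  have h5 : Real.sqrt t * L ≤ 2 * k * C := by
    have := Real.sqrt_le_sqrt hsq
    rw [Real.sqrt_mul ht0, Real.sqrt_sq hL0.le, Real.sqrt_sq hkc] at this
    exact this
  have h6 : t * L ≤ Real.sqrt t * (2 * k * C) := by
    calc t * L = Real.sqrt t * (Real.sqrt t * L) := by
          rw [← mul_assoc, Real.mul_self_sqrt ht0]
      _ ≤ Real.sqrt t * (2 * k * C) :=
          mul_le_mul_of_nonneg_left h5 (Real.sqrt_nonneg _)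
  have h7 : Real.sqrt t ≤ Real.sqrt (t + 1) := Real.sqrt_le_sqrt (by linarith)
  calc t * L ≤ Real.sqrt t * (2 * k * C) := h6
    _ ≤ Real.sqrt (t + 1) * (2 * k * C) := mul_le_mul_of_nonneg_right h7 hkc
    _ = 2 * Real.sqrt (t + 1) * k * C := by ring
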